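/- Let G be a group, q a prime number, and g ∈ G an element with g^q = 1. Let k_u, k_M, r₁, r₂ ∈ ZMod q with k_u ≠ 0, let U be a natural number, and define the shuffle map S : G → G by S(s) = (s^(r₂.val))^(r₁.val). Then S iterated U times on the initial index label g^(k_M.val) satisfies S^[U](g^(k_M.val)) = (g^((k_u · (r₁·r₂)^U).val))^((k_M · k_u⁻¹).val). That is, the client trapdoor generated under the shuffle-aware key k_u·(r₁·r₂)^U, after the cloud applies the authorization re-encryption key rk_{u→M} = k_M/k_u, equals the encrypted index label after U shuffle rounds. -/
import Mathlib

private lemma pow_val_mod {G : Type*} [Group G] (q : ℕ) (g : G) (hg : g ^ q = 1)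
    (n : ℕ) : g ^ n = g ^ (n % q) := by
  conv_lhs => rw [← Nat.mod_add_div n q]
  rw [pow_add, pow_mul, hg, one_pow, mul_one]

private lemma pow_val_mul {G : Type*} [Group G] (q : ℕ) [NeZero q] (g : G)
    (hg : g ^ q = 1) (x y : ZMod q) :
    (g ^ x.val) ^ y.val = g ^ (x * y).val := by
  rw [← pow_mul, pow_val_mod q g hg, ZMod.val_mul]

/-- Shuffle-consistency of BRASP trapdoors: after `U` index-shuffle rounds
(each raising a label `s` to `(s^(r₂))^(r₁)`), the encrypted index label equals
the client trapdoor generated under the shuffle-aware key `k_u·(r₁·r₂)^U`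
re-encrypted by the cloud with the authorization key `rk_{u→M} = k_M/k_u`. -/
theorem tpf_shuffle_trapdoor_consistent {G : Type*} [Group G]
    (q : ℕ) [Fact (Nat.Prime q)] (g : G) (hg : g ^ q = 1)
    (k_u k_M r₁ r₂ : ZMod q) (hku : k_u ≠ 0) (U : ℕ) :
    (fun s : G => (s ^ r₂.val) ^ r₁.val)^[U] (g ^ k_M.val) =
      (g ^ ((k_u * (r₁ * r₂) ^ U).val)) ^ ((k_M * k_u⁻¹).val) := by
  have hiter : ∀ (n : ℕ) (a : ZMod q),
      (fun s : G => (s ^ r₂.val) ^ r₁.val)^[n] (g ^ a.val)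
        = g ^ (a * (r₁ * r₂) ^ n).val := by
    intro n
    induction n with
    | zero => intro a; simp
    | succ n ih =>
      intro a
      rw [Function.iterate_succ_apply, pow_val_mul q g hg,
        pow_val_mul q g hg, ih]
      ring_nf
  rw [hiter U k_M, pow_val_mul q g hg]
  congr 1
  have : k_u * (r₁ * r₂) ^ U * (k_M * k_u⁻¹)
      = (k_u * k_u⁻¹) * (k_M * (r₁ * r₂) ^ U) := by ring
  rw [this, mul_inv_cancel₀ hku, one_mul]
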